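/- Let n > 1 and F_n = 2^(2^n) + 1. Define s_0 = 8, s_{k+1} = s_k² − 2 (so s_k = 2·T_{2^k}(4)). If F_n is prime then F_n divides s_{2^n − 2}. -/

import Mathlib

def fermatSeq : ℕ → ℤ
  | 0 => 8
  | k + 1 => fermatSeq k ^ 2 - 2

open Polynomial

/-- For a nonsquare `a` in `ZMod p`, Euler's criterion gives `a ^ (p/2) = -1`. -/
lemma ns23 : ¬ IsSquare (2 : ZMod 3) := by decide
lemma ns25 : ¬ IsSquare (2 : ZMod 5) := by decide

lemma euler_neg {p : ℕ} [Fact p.Prime] (hp : 2 < p) {a : ZMod p} (ha : a ≠ 0)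
    (hns : ¬ IsSquare a) : a ^ (p / 2) = -1 := by
  have h1 : a ^ (p - 1) = 1 := ZMod.pow_card_sub_one_eq_one ha
  have h2 : p - 1 = 2 * (p / 2) := by
    rcases Nat.Prime.eq_two_or_odd (Fact.out : p.Prime) with h | h <;> omega
  have hsq : a ^ (p / 2) * a ^ (p / 2) = 1 := by
    rw [← pow_add, ← two_mul, ← h2, h1]
  rcases mul_self_eq_one_iff.mp hsq with h | h
  · exact absurd ((ZMod.euler_criterion p ha).mpr h) hns
  · exact h

theorem fermat_pepin_necessity (n : ℕ) (hn : 1 < n)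
    (hF : Nat.Prime (2 ^ 2 ^ n + 1)) :
    ((2 ^ 2 ^ n + 1 : ℕ) : ℤ) ∣ fermatSeq (2 ^ n - 2) := by
  set P : ℕ := 2 ^ 2 ^ n + 1 with hP
  haveI : Fact P.Prime := ⟨hF⟩
  -- arithmetic facts
  have hN4 : 4 ≤ 2 ^ n := by
    calc 4 = 2 ^ 2 := rfl
    _ ≤ 2 ^ n := Nat.pow_le_pow_right (by norm_num) hn
  have hP17 : 17 ≤ P := by
    have : 2 ^ 4 ≤ 2 ^ 2 ^ n := Nat.pow_le_pow_right (by norm_num) hN4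
    omega
  have h8 : P % 8 = 1 := by
    have : 2 ^ 2 ^ n = 8 * 2 ^ (2 ^ n - 3) := by
      rw [show (8:ℕ) = 2 ^ 3 from rfl, ← pow_add]
      congr 1
      omega
    omega
  have h4 : P % 4 = 1 := by omega
  have h3 : P % 3 = 2 := by
    have h1 : 2 ^ 2 ^ n = 4 ^ 2 ^ (n - 1) := by
      rw [show (4:ℕ) = 2 ^ 2 from rfl, ← pow_mul]
      congr 1
      rw [← pow_succ']
      congr 1
      omega
    have : 4 ^ 2 ^ (n - 1) % 3 = 1 := by
      rw [Nat.pow_mod]; norm_num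
    omega
  have h5 : P % 5 = 2 := by
    have h1 : 2 ^ 2 ^ n = 16 ^ 2 ^ (n - 2) := by
      rw [show (16:ℕ) = 2 ^ 4 from rfl, ← pow_mul]
      congr 1
      rw [show (4:ℕ) = 2 ^ 2 from rfl, ← pow_add]
      congr 1
      omega
    have : 16 ^ 2 ^ (n - 2) % 5 = 1 := by
      rw [Nat.pow_mod]; norm_num
    omega
  have hPdiv2 : P / 2 = 2 ^ (2 ^ n - 1) := by
    have : 2 ^ 2 ^ n = 2 * 2 ^ (2 ^ n - 1) := by
      rw [← pow_succ']
      congr 1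
      omega
    omega
  -- nonsquares 3 and 5, squares 2 and 15
  haveI : Fact (Nat.Prime 3) := ⟨by norm_num⟩
  haveI : Fact (Nat.Prime 5) := ⟨by norm_num⟩
  have hcast3 : ((3 : ℕ) : ZMod P) = (3 : ZMod P) := by push_cast; ring
  have hcast5 : ((5 : ℕ) : ZMod P) = (5 : ZMod P) := by push_cast; ring
  have h3ne : (3 : ZMod P) ≠ 0 := by
    rw [← hcast3, Ne, ZMod.natCast_eq_zero_iff]
    intro h
    exact absurd (Nat.le_of_dvd (by norm_num) h) (by omega)
  have h5ne : (5 : ZMod P) ≠ 0 := by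
    rw [← hcast5, Ne, ZMod.natCast_eq_zero_iff]
    intro h
    exact absurd (Nat.le_of_dvd (by norm_num) h) (by omega)
  have h3ns : ¬ IsSquare (3 : ZMod P) := by
    rw [← hcast3, ZMod.exists_sq_eq_prime_iff_of_mod_four_eq_one (q := 3) h4 (by norm_num)]
    have : ((P : ℕ) : ZMod 3) = ((2 : ℕ) : ZMod 3) := by
      rw [← ZMod.natCast_mod P 3, h3]
    rw [this, show ((2 : ℕ) : ZMod 3) = (2 : ZMod 3) by push_cast; ring]
    exact ns23
  have h5ns : ¬ IsSquare (5 : ZMod P) := by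
    rw [← hcast5, ZMod.exists_sq_eq_prime_iff_of_mod_four_eq_one (q := 5) h4 (by norm_num)]
    have : ((P : ℕ) : ZMod 5) = ((2 : ℕ) : ZMod 5) := by
      rw [← ZMod.natCast_mod P 5, h5]
    rw [this, show ((2 : ℕ) : ZMod 5) = (2 : ZMod 5) by push_cast; ring]
    exact ns25
  have h2sq : (2 : ZMod P) ^ (P / 2) = 1 := by
    have h2ne : (2 : ZMod P) ≠ 0 := by
      rw [show (2 : ZMod P) = ((2:ℕ) : ZMod P) by push_cast; ring,
        Ne, ZMod.natCast_eq_zero_iff]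
      intro h
      exact absurd (Nat.le_of_dvd (by norm_num) h) (by omega)
    exact (ZMod.euler_criterion P h2ne).mp
      ((ZMod.exists_sq_eq_two_iff (by omega)).mpr (Or.inl h8))
  have h3e : (3 : ZMod P) ^ (P / 2) = -1 := euler_neg (by omega) h3ne h3ns
  have h5e : (5 : ZMod P) ^ (P / 2) = -1 := euler_neg (by omega) h5ne h5ns
  have h15sq : IsSquare (15 : ZMod P) := by
    have h15ne : (15 : ZMod P) ≠ 0 := by
      rw [show (15 : ZMod P) = ((15:ℕ) : ZMod P) by push_cast; ring,
        Ne, ZMod.natCast_eq_zero_iff]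
      intro h
      exact absurd (Nat.le_of_dvd (by norm_num) h) (by omega)
    refine (ZMod.euler_criterion P h15ne).mpr ?_
    rw [show (15 : ZMod P) = 3 * 5 by norm_num, mul_pow, h3e, h5e]
    ring
  obtain ⟨s, hs⟩ := h15sq   -- hs : 15 = s * s
  -- the field K = ZMod P [√3]
  have hirr : Irreducible (X ^ 2 - C (3 : ZMod P)) :=
    X_pow_sub_C_irreducible_of_prime Nat.prime_two
      (fun b hb => h3ns ⟨b, by rw [← hb]; ring⟩)
  haveI : Fact (Irreducible (X ^ 2 - C (3 : ZMod P))) := ⟨hirr⟩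
  set K := AdjoinRoot (X ^ 2 - C (3 : ZMod P)) with hK
  haveI : CharP K P := charP_of_injective_ringHom (algebraMap (ZMod P) K).injective P
  set φ : ZMod P →+* K := algebraMap (ZMod P) K with hφ
  have hφinj : Function.Injective φ := φ.injective
  set r : K := AdjoinRoot.root (X ^ 2 - C (3 : ZMod P)) with hrdef
  have hr : r ^ 2 = φ 3 := by
    have h := AdjoinRoot.eval₂_root (X ^ 2 - C (3 : ZMod P))
    simp only [eval₂_sub, eval₂_pow, eval₂_X, eval₂_C] at h
    have : AdjoinRoot.of (X ^ 2 - C (3 : ZMod P)) = φ := rfl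
    rw [← this]
    linear_combination h
  -- roots of 5 and the element u = √3 + √5
  set c : ZMod P := 3⁻¹ * s with hc
  have h3c : (3 : ZMod P) * c = s := by
    rw [hc, ← mul_assoc, mul_inv_cancel₀ h3ne, one_mul]
  have h3c2 : (3 : ZMod P) * c ^ 2 = 5 := by
    have : (3 : ZMod P) * (3 * c ^ 2) = 3 * 5 := by
      calc (3 : ZMod P) * (3 * c ^ 2) = (3 * c) * (3 * c) := by ring
      _ = s * s := by rw [h3c]
      _ = 15 := hs.symm
      _ = 3 * 5 := by norm_num
    exact mul_left_cancel₀ h3ne this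
  set u : K := (1 + φ c) * r with hu
  set w : ZMod P := 4 + s with hw
  set w' : ZMod P := 4 - s with hw'
  have hww' : w * w' = 1 := by
    rw [hw, hw']
    linear_combination hs
  have hu2 : u ^ 2 = φ (2 * w) := by
    have h1 : (1 : K) + φ c = φ (1 + c) := by rw [map_add, map_one]
    rw [hu, mul_pow, hr, h1, ← map_pow φ, ← map_mul φ]
    congr 1
    rw [hw]
    linear_combination 2 * h3c + h3c2
  -- Frobenius computation : u ^ P = -u
  have hrP : r ^ P = -r := by
    have hPsplit : P = 2 * (P / 2) + 1 := by omega
    calc r ^ P = (r ^ 2) ^ (P / 2) * r := by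
          rw [← pow_mul, ← pow_succ, ← hPsplit]
    _ = φ ((3 : ZMod P) ^ (P / 2)) * r := by rw [hr, ← map_pow φ 3 (P / 2)]
    _ = -r := by rw [h3e, map_neg, map_one, neg_one_mul]
  have huP : u ^ P = -u := by
    have hfr : ((φ c) * r + r) ^ P = ((φ c) * r) ^ P + r ^ P :=
      add_pow_char (R := K) (p := P) _ _
    have hcP : (φ c) ^ P = φ c := by rw [← map_pow φ c P, ZMod.pow_card]
    calc u ^ P = ((φ c) * r + r) ^ P := by rw [hu, add_mul, one_mul, add_comm]
    _ = ((φ c) * r) ^ P + r ^ P := hfr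
    _ = (φ c) ^ P * r ^ P + r ^ P := by rw [mul_pow]
    _ = φ c * (-r) + (-r) := by rw [hcP, hrP]
    _ = -u := by rw [hu, add_mul, one_mul, neg_add, mul_neg, add_comm]
  -- conclude w ^ (P/2) = -1
  have hwne : w ≠ 0 := fun h => by simp [h] at hww'
  have h2wne : (2 : ZMod P) * w ≠ 0 := by
    have h2ne : (2 : ZMod P) ≠ 0 := by
      rw [show (2 : ZMod P) = ((2:ℕ) : ZMod P) by push_cast; ring,
        Ne, ZMod.natCast_eq_zero_iff]
      intro h
      exact absurd (Nat.le_of_dvd (by norm_num) h) (by omega)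
    exact mul_ne_zero h2ne hwne
  have hune : u ≠ 0 := by
    intro h
    apply h2wne
    apply hφinj
    rw [map_zero, ← hu2, h]
    ring
  have huP1 : u ^ (P - 1) = -1 := by
    have hPsplit : P - 1 + 1 = P := by omega
    have : u ^ (P - 1) * u = (-1) * u := by
      rw [← pow_succ, hPsplit, huP]; ring
    exact mul_right_cancel₀ hune this
  have hwP : w ^ (P / 2) = -1 := by
    apply hφinj
    rw [map_neg φ, map_one φ]
    have h1 : φ (2 * w) ^ (P / 2) = -1 := by
      rw [← hu2, ← pow_mul]
      have : 2 * (P / 2) = P - 1 := by omega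
      rw [this, huP1]
    have h2 : φ (2 * w) ^ (P / 2) = φ ((2:ZMod P) ^ (P/2)) * φ (w ^ (P / 2)) := by
      rw [← map_pow φ, ← map_mul φ, ← mul_pow]
    rw [h2, h2sq, map_one, one_mul] at h1
    exact h1
  -- fermatSeq in ZMod P
  have key : ∀ k, ((fermatSeq k : ℤ) : ZMod P) = w ^ (2 ^ k) + w' ^ (2 ^ k) := by
    intro k
    induction k with
    | zero =>
      show ((8 : ℤ) : ZMod P) = w ^ 1 + w' ^ 1
      rw [hw, hw']; push_cast; ring
    | succ k ih =>
      have hk : w ^ 2 ^ k * w' ^ 2 ^ k = 1 := by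
        rw [← mul_pow, hww', one_pow]
      have hstep : fermatSeq (k + 1) = fermatSeq k ^ 2 - 2 := rfl
      rw [hstep]
      push_cast
      rw [ih, pow_succ 2 k, pow_mul, pow_mul]
      linear_combination 2 * hk
  -- final step
  have hexp : 2 ^ (2 ^ n - 2) * 2 = P / 2 := by
    rw [hPdiv2, ← pow_succ]
    congr 1
    omega
  have hfinal : ((fermatSeq (2 ^ n - 2) : ℤ) : ZMod P) = 0 := by
    rw [key]
    have hk : w ^ 2 ^ (2 ^ n - 2) * w' ^ 2 ^ (2 ^ n - 2) = 1 := by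
      rw [← mul_pow, hww', one_pow]
    have hwk : (w ^ 2 ^ (2 ^ n - 2)) ^ 2 = -1 := by
      rw [← pow_mul, hexp, hwP]
    have hwkne : w ^ 2 ^ (2 ^ n - 2) ≠ 0 := pow_ne_zero _ hwne
    have : w ^ 2 ^ (2 ^ n - 2) * (w ^ 2 ^ (2 ^ n - 2) + w' ^ 2 ^ (2 ^ n - 2)) = 0 := by
      linear_combination hwk + hk
    rcases mul_eq_zero.mp this with h | h
    · exact absurd h hwkne
    · exact h
  exact (ZMod.intCast_zmod_eq_zero_iff_dvd _ _).mp hfinal
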